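/- In the regular bipartite drawing of K_{m,n} (vertices p_i = (0, (i−1)d) for 1 ≤ i ≤ m and q_j = (w, (j−1)h) for 1 ≤ j ≤ n, with w, d, h > 0), all segments p_i q_j with i + j = k + 1, for a fixed k with 1 < k < m + n − 1, pass through a common point, and this point lies on the vertical line x = (d/(d+h))·w. -/

import Mathlib

/-- In the regular bipartite drawing of `K_{m,n}` with vertices `p i = (0, (i-1)d)` and
`q j = (w, (j-1)h)`, all segments `p i q j` of the `k`-th level (`i + j = k + 1`) pass through a
common point lying on the vertical line `x = (d/(d+h))·w`, for every `1 < k < m + n - 1`. -/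
theorem stmt8 (m n k : ℕ) (hm : 1 ≤ m) (hn : 1 ≤ n) (hk1 : 1 < k) (hk2 : k < m + n - 1)
    (w d h : ℝ) (hw : 0 < w) (hd : 0 < d) (hh : 0 < h) :
    ∃ pt : ℝ × ℝ, pt.1 = d / (d + h) * w ∧
      ∀ i j : ℕ, 1 ≤ i → i ≤ m → 1 ≤ j → j ≤ n → i + j = k + 1 →
        pt ∈ segment ℝ ((0 : ℝ), ((i : ℝ) - 1) * d) (w, ((j : ℝ) - 1) * h) := by
  have hdh : 0 < d + h := by linarith
  refine ⟨(d / (d + h) * w, d * h * ((k : ℝ) - 1) / (d + h)), rfl, ?_⟩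
  intro i j hi him hj hjn hij
  have hij' : (i : ℝ) + j = (k : ℝ) + 1 := by exact_mod_cast congrArg Nat.cast hij
  refine ⟨h / (d + h), d / (d + h), by positivity, by positivity, ?_, ?_⟩
  · field_simp; ring
  · apply Prod.ext <;> simp <;> field_simp
    linear_combination hij'
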